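/- Suppose the UCB policy is run with a parameter α satisfying ξη(1−η) ≤ α < ξ(1−η) and α > 2. Then for every sub-optimal arm i ≠ i* and every integer n ≥ 1, the expected number of times arm i is played in the first n rounds satisfies E[T_i(n)] ≤ (2 β^{1/ξ} / Δ_i)^{1/(1−η)} · n^{α/(ξ(1−η))} + 2/(α−2) + 1. -/

import Mathlib

open MeasureTheory ProbabilityTheory Finset

noncomputable section

/-- Empirical average `X̄_{i,n} = (1/n) ∑_{t=1}^n X_{i,t}` of the first `n` rewards of arm `i`. -/
def empAvg {Ω : Type*} {K : ℕ} (X : Fin K → ℕ → Ω → ℝ) (i : Fin K) (n : ℕ) (ω : Ω) : ℝ :=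
  (∑ t ∈ Finset.Icc 1 n, X i t ω) / n

/-- Bonus term `B_{t,s} = β^{1/ξ} t^{α/ξ} / s^{1-η}`. -/
def bonus (β ξ α η : ℝ) (t s : ℕ) : ℝ :=
  β ^ (1 / ξ) * (t : ℝ) ^ (α / ξ) / (s : ℝ) ^ (1 - η)

/-- Upper confidence index `U_{i,s,t} = X̄_{i,s} + B_{t,s}`. -/
def ucbIdx {Ω : Type*} {K : ℕ} (X : Fin K → ℕ → Ω → ℝ) (β ξ α η : ℝ)
    (i : Fin K) (s t : ℕ) (ω : Ω) : ℝ :=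
  empAvg X i s ω + bonus β ξ α η t s

/-- `T_i(t) = ∑_{l=1}^t 1{I_l = i}`, the number of plays of arm `i` up to (and including)
time `t`. -/
def playCount {Ω : Type*} {K : ℕ} (I : ℕ → Ω → Fin K) (i : Fin K) (t : ℕ) (ω : Ω) : ℕ :=
  ((Finset.Icc 1 t).filter fun l => I l ω = i).card

/-- The `EReal`-valued index `X̄_{i,T_i(t)} + B_{t,T_i(t)}` used by the UCB policy at the end
of time `t`, with the convention that the index is `+∞` when `T_i(t) = 0`
(i.e. `B_{t,0} = +∞`). -/
def ucbIdxE {Ω : Type*} {K : ℕ} (X : Fin K → ℕ → Ω → ℝ) (β ξ α η : ℝ)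
    (I : ℕ → Ω → Fin K) (j : Fin K) (t : ℕ) (ω : Ω) : EReal :=
  if playCount I j t ω = 0 then ⊤
  else ((ucbIdx X β ξ α η j (playCount I j t ω) t ω : ℝ) : EReal)

/-! ### Auxiliary lemmas -/

lemma playCount_mono' {Ω : Type*} {K : ℕ} (I : ℕ → Ω → Fin K) (i : Fin K) {t t' : ℕ}
    (h : t ≤ t') (ω : Ω) : playCount I i t ω ≤ playCount I i t' ω :=
  Finset.card_le_card (Finset.filter_subset_filter _ (Finset.Icc_subset_Icc_right h))

lemma playCount_le' {Ω : Type*} {K : ℕ} (I : ℕ → Ω → Fin K) (i : Fin K) (t : ℕ) (ω : Ω) :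
    playCount I i t ω ≤ t := by
  calc playCount I i t ω ≤ (Finset.Icc 1 t).card := Finset.card_le_card (Finset.filter_subset _ _)
  _ = t := by simp

lemma playCount_succ' {Ω : Type*} {K : ℕ} (I : ℕ → Ω → Fin K) (i : Fin K) (t : ℕ) (ω : Ω) :
    playCount I i (t + 1) ω
      = playCount I i t ω + (if I (t + 1) ω = i then 1 else 0) := by
  unfold playCount
  rw [show Finset.Icc 1 (t+1) = insert (t+1) (Finset.Icc 1 t) by
    ext x; simp [Finset.mem_Icc]; omega]
  rw [Finset.filter_insert]
  by_cases h : I (t+1) ω = i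
  · rw [if_pos h, if_pos h, Finset.card_insert_of_notMem (by simp)]
  · rw [if_neg h, if_neg h]; ring

lemma playCount_play' {Ω : Type*} {K : ℕ} (I : ℕ → Ω → Fin K) (i : Fin K) {t : ℕ} (ht : 1 ≤ t)
    (ω : Ω) (h : I t ω = i) : playCount I i t ω = playCount I i (t - 1) ω + 1 := by
  obtain ⟨t, rfl⟩ : ∃ t', t = t' + 1 := ⟨t - 1, by omega⟩
  simp [playCount_succ', h]

lemma playCount_strict' {Ω : Type*} {K : ℕ} (I : ℕ → Ω → Fin K) (i : Fin K) {t t' : ℕ}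
    (h : t < t') (ω : Ω) (hp : I t' ω = i) : playCount I i t ω < playCount I i t' ω := by
  have h1 := playCount_mono' I i (show t ≤ t' - 1 by omega) ω
  have h2 := playCount_play' I i (show 1 ≤ t' by omega) ω hp
  omega

lemma playCount_add_le' {Ω : Type*} {K : ℕ} (I : ℕ → Ω → Fin K) {i j : Fin K} (hij : i ≠ j)
    (t : ℕ) (ω : Ω) : playCount I i t ω + playCount I j t ω ≤ t := by
  unfold playCount
  rw [← Finset.card_union_of_disjoint]
  · calc _ ≤ (Finset.Icc 1 t).card := Finset.card_le_card (by
      apply Finset.union_subset <;> exact Finset.filter_subset _ _)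
    _ = t := by simp
  · rw [Finset.disjoint_filter]
    intro x _ hx hx'
    exact hij (hx ▸ hx')

lemma playCount_le_decomp' {Ω : Type*} {K : ℕ} (I : ℕ → Ω → Fin K) (i : Fin K)
    (u n : ℕ) (ω : Ω) :
    playCount I i n ω
      ≤ u + ∑ t ∈ Finset.Icc 1 n,
          (if I t ω = i ∧ u ≤ playCount I i (t - 1) ω then 1 else 0) := by
  classical
  set S := (Finset.Icc 1 n).filter (fun t => I t ω = i) with hS
  have hcard : playCount I i n ω = S.card := rfl
  have hsplit := Finset.card_filter_add_card_filter_not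
    (s := S) (p := fun t => u ≤ playCount I i (t - 1) ω)
  have h1 : (S.filter (fun t => ¬ u ≤ playCount I i (t - 1) ω)).card ≤ u := by
    have : (S.filter (fun t => ¬ u ≤ playCount I i (t - 1) ω)).card ≤ (Finset.Icc 1 u).card := by
      apply Finset.card_le_card_of_injOn (fun t => playCount I i t ω)
      · intro t ht
        simp only [Finset.mem_coe, Finset.mem_filter, hS, Finset.mem_Icc, not_le] at ht
        obtain ⟨⟨⟨ht1, htn⟩, hti⟩, htu⟩ := ht
        have := playCount_play' I i ht1 ω hti
        simp only [Finset.mem_coe, Finset.mem_Icc]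
        omega
      · intro t ht t' ht' heq
        simp only [Finset.mem_coe, Finset.mem_filter, hS, Finset.mem_Icc, not_le] at ht ht'
        rcases lt_trichotomy t t' with h | h | h
        · exact absurd heq (ne_of_lt (playCount_strict' I i h ω ht'.1.2))
        · exact h
        · exact absurd heq.symm (ne_of_lt (playCount_strict' I i h ω ht.1.2))
    simpa using this
  have h2 : (S.filter (fun t => u ≤ playCount I i (t - 1) ω)).card
      = ∑ t ∈ Finset.Icc 1 n, (if I t ω = i ∧ u ≤ playCount I i (t - 1) ω then 1 else 0) := by
    rw [hS, Finset.filter_filter, Finset.card_filter]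
  omega

lemma measurable_playCount' {Ω : Type*} [MeasurableSpace Ω] {K : ℕ} {I : ℕ → Ω → Fin K}
    (hI : ∀ l, Measurable (I l)) (i : Fin K) (t : ℕ) :
    Measurable (fun ω => playCount I i t ω) := by
  have : (fun ω => playCount I i t ω)
      = fun ω => ∑ l ∈ Finset.Icc 1 t, (if I l ω = i then 1 else 0) := by
    funext ω; exact Finset.card_filter _ _
  rw [this]
  apply Finset.measurable_sum
  intro l _
  exact Measurable.ite ((hI l) (measurableSet_singleton i)) measurable_const measurable_const

lemma measurable_empAvg' {Ω : Type*} [MeasurableSpace Ω] {K : ℕ} {X : Fin K → ℕ → Ω → ℝ}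
    (hX : ∀ i t, Measurable (X i t)) (i : Fin K) (s : ℕ) :
    Measurable (fun ω => empAvg X i s ω) := by
  unfold empAvg
  exact (Finset.measurable_sum _ (fun t _ => hX i t)).div_const _

lemma rpow_step' {α : ℝ} (hα : 2 < α) {a : ℝ} (ha : 1 ≤ a) :
    (α - 2) * (a + 1) ^ (1 - α) ≤ a ^ (2 - α) - (a + 1) ^ (2 - α) := by
  have ha0 : (0:ℝ) < a := by linarith
  have hderiv : ∀ x ∈ Set.Icc a (a+1), HasDerivAt (fun x : ℝ => x ^ (2 - α))
      ((2 - α) * x ^ (1 - α)) x := by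
    intro x hx
    have hx0 : x ≠ 0 := ne_of_gt (lt_of_lt_of_le ha0 hx.1)
    have := Real.hasDerivAt_rpow_const (x := x) (p := 2 - α) (Or.inl hx0)
    convert this using 2
    ring
  obtain ⟨c, hc, hceq⟩ := exists_hasDerivAt_eq_slope (fun x => x ^ (2 - α))
    (fun x => (2 - α) * x ^ (1 - α)) (show a < a + 1 by linarith)
    (fun x hx => (hderiv x hx).continuousAt.continuousWithinAt)
    (fun x hx => hderiv x (Set.mem_Icc_of_Ioo hx))
  rcases hc with ⟨hc1, hc2⟩
  have hc0 : 0 < c := by linarith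
  have hmono : (a + 1) ^ (1 - α) ≤ c ^ (1 - α) :=
    Real.rpow_le_rpow_of_nonpos hc0 (le_of_lt hc2) (by linarith)
  have heq : (2 - α) * c ^ (1 - α) = (a + 1) ^ (2 - α) - a ^ (2 - α) := by
    rw [hceq]; ring_nf
  nlinarith [heq, hmono]

lemma sum_rpow_le' {α : ℝ} (hα : 2 < α) (M : ℕ) :
    ∑ m ∈ Finset.Icc 2 M, (m : ℝ) ^ (1 - α) ≤ 1 / (α - 2) := by
  have hα2 : (0:ℝ) < α - 2 := by linarith
  have key : ∀ M : ℕ, ∑ m ∈ Finset.Icc 2 M, (m : ℝ) ^ (1 - α)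
      ≤ (1 - (max M 1 : ℕ) ^ (2 - α)) / (α - 2) := by
    intro M
    induction M with
    | zero => norm_num
    | succ M ih =>
      rcases Nat.lt_or_ge (M + 1) 2 with h | h
      · have : M = 0 := by omega
        subst this
        norm_num
      · have hM1 : 1 ≤ M := by omega
        have hmax : max (M+1) 1 = M + 1 := by omega
        rw [hmax, Finset.sum_Icc_succ_top h]
        rcases Nat.lt_or_ge M 2 with h2 | h2
        · interval_cases M
          simp only [show Finset.Icc 2 1 = ∅ from rfl, Finset.sum_empty, zero_add]
          have step := rpow_step' hα (le_refl (1:ℝ))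
          norm_num [Real.one_rpow] at step
          rw [le_div_iff₀ hα2]
          push_cast
          norm_num
          nlinarith [step]
        · have hmaxM : max M 1 = M := by omega
          rw [hmaxM] at ih
          have step := rpow_step' hα (show (1:ℝ) ≤ (M:ℝ) by exact_mod_cast hM1)
          have : ((M:ℝ) + 1) ^ (1 - α) ≤ ((M:ℝ) ^ (2-α) - ((M:ℝ)+1) ^ (2-α)) / (α - 2) := by
            rw [le_div_iff₀ hα2]; linarith [step]
          push_cast
          calc _ ≤ (1 - (M:ℝ) ^ (2 - α)) / (α - 2)
                  + ((M:ℝ) ^ (2-α) - ((M:ℝ)+1) ^ (2-α)) / (α - 2) := by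
                push_cast at ih; linarith
          _ = (1 - ((M:ℝ)+1) ^ (2 - α)) / (α - 2) := by ring
  calc ∑ m ∈ Finset.Icc 2 M, (m : ℝ) ^ (1 - α)
      ≤ (1 - (max M 1 : ℕ) ^ (2 - α)) / (α - 2) := key M
  _ ≤ 1 / (α - 2) := by
      gcongr
      have : (0:ℝ) ≤ ((max M 1 : ℕ) : ℝ) ^ (2 - α) := by positivity
      linarith

set_option maxHeartbeats 2000000 in
/-- Under `ξη(1−η) ≤ α < ξ(1−η)` and `α > 2`, the expected number of plays of a
sub-optimal arm `i ≠ i*` in the first `n` rounds satisfies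
`E[T_i(n)] ≤ (2β^{1/ξ}/Δ_i)^{1/(1−η)} n^{α/(ξ(1−η))} + 2/(α−2) + 1`. -/
theorem ucb_expected_suboptimal_plays
    {Ω : Type*} [MeasurableSpace Ω] (P : Measure Ω) [IsProbabilityMeasure P]
    (K : ℕ) (hK : 2 ≤ K) (R : ℝ) (hR : 0 < R)
    (X : Fin K → ℕ → Ω → ℝ)
    (hXmeas : ∀ i t, Measurable (X i t))
    (hXbdd : ∀ i t ω, |X i t ω| ≤ R)
    (μ : Fin K → ℝ)
    (hconv : ∀ i, Filter.Tendsto (fun n => ∫ ω, empAvg X i n ω ∂P)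
      Filter.atTop (nhds (μ i)))
    (β ξ η α : ℝ) (hβ : 1 < β) (hξ : 0 < ξ) (hη : 1 / 2 ≤ η) (hη' : η < 1)
    (hα2 : 2 < α) (hαlow : ξ * η * (1 - η) ≤ α) (hαhigh : α < ξ * (1 - η))
    (hconc : ∀ i : Fin K, ∀ n : ℕ, 1 ≤ n → ∀ z : ℝ, 1 ≤ z →
      P {ω | (n : ℝ) * empAvg X i n ω - n * μ i ≥ (n : ℝ) ^ η * z}
        ≤ ENNReal.ofReal (β / z ^ ξ) ∧
      P {ω | (n : ℝ) * empAvg X i n ω - n * μ i ≤ -((n : ℝ) ^ η * z)}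
        ≤ ENNReal.ofReal (β / z ^ ξ))
    (istar : Fin K) (hopt : ∀ j, j ≠ istar → μ j < μ istar)
    (I : ℕ → Ω → Fin K)
    (hImeas : ∀ t, Measurable (I t))
    (hPolicy : ∀ t : ℕ, 1 ≤ t → ∀ ω : Ω, ∀ j : Fin K,
      ucbIdxE X β ξ α η I j (t - 1) ω ≤ ucbIdxE X β ξ α η I (I t ω) (t - 1) ω)
    (i : Fin K) (hi : i ≠ istar) (n : ℕ) (hn : 1 ≤ n) :
    ∫ ω, (playCount I i n ω : ℝ) ∂P
      ≤ (2 * β ^ (1 / ξ) / (μ istar - μ i)) ^ (1 / (1 - η)) * (n : ℝ) ^ (α / (ξ * (1 - η)))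
        + 2 / (α - 2) + 1 := by
  classical
  have hΔ : 0 < μ istar - μ i := sub_pos.mpr (hopt i hi)
  have hη1 : (0:ℝ) < 1 - η := by linarith
  have hβ0 : (0:ℝ) < β := by linarith
  have hb1 : (1:ℝ) ≤ β ^ (1 / ξ) := Real.one_le_rpow hβ.le (by positivity)
  have hb0 : (0:ℝ) < β ^ (1 / ξ) := by linarith
  set A : ℝ := (2 * β ^ (1 / ξ) / (μ istar - μ i)) ^ (1 / (1 - η)) * (n : ℝ) ^ (α / (ξ * (1 - η)))
    with hAdef
  have hA0 : 0 ≤ A := by positivity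
  set u : ℕ := ⌊A⌋₊ + 1 with hudef
  have hu1 : 1 ≤ u := Nat.le_add_left 1 _
  have huA : (u : ℝ) ≤ A + 1 := by
    rw [hudef]; push_cast; linarith [Nat.floor_le hA0]
  have hAu : A < (u : ℝ) := by
    rw [hudef]; push_cast; exact Nat.lt_floor_add_one A
  -- the bad events
  set E : ℕ → Set Ω := fun t => {ω | I t ω = i ∧ u ≤ playCount I i (t - 1) ω} with hEdef
  have hEmeas : ∀ t, MeasurableSet (E t) := by
    intro t
    exact ((hImeas t) (measurableSet_singleton i)).inter
      ((measurable_playCount' hImeas i (t - 1)) measurableSet_Ici)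
  -- the confidence-bound sets
  set z : ℕ → ℝ := fun t => β ^ (1 / ξ) * ((t - 1 : ℕ) : ℝ) ^ (α / ξ) with hzdef
  set G : ℕ → Set Ω := fun t => ⋃ s' ∈ Finset.Icc 1 (t - 1),
    {ω | (s' : ℝ) * empAvg X istar s' ω - s' * μ istar ≤ -((s' : ℝ) ^ η * z t)} with hGdef
  set H : ℕ → Set Ω := fun t => ⋃ s ∈ Finset.Icc u (t - 1),
    {ω | (s : ℝ) * empAvg X i s ω - s * μ i ≥ (s : ℝ) ^ η * z t} with hHdef
  -- s * B_{m,s} = s^η z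
  have hbonus_mul : ∀ (s m : ℕ), 1 ≤ s →
      (s : ℝ) * bonus β ξ α η m s = (s : ℝ) ^ η * (β ^ (1 / ξ) * (m : ℝ) ^ (α / ξ)) := by
    intro s m hs
    have hs0 : (0:ℝ) < (s:ℝ) := by exact_mod_cast hs
    have hsplit : (s : ℝ) = (s : ℝ) ^ η * (s : ℝ) ^ (1 - η) := by
      rw [← Real.rpow_add hs0, show η + (1 - η) = 1 by ring, Real.rpow_one]
    unfold bonus
    rw [div_eq_mul_inv]
    nth_rewrite 1 [hsplit]
    have : ((s : ℝ) ^ (1 - η)) ≠ 0 := by positivity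
    field_simp
  -- bonus monotone in time
  have hbonus_mono : ∀ (s m : ℕ), 1 ≤ s → m ≤ n →
      bonus β ξ α η m s ≤ bonus β ξ α η n s := by
    intro s m hs hmn
    unfold bonus
    gcongr
    all_goals
      first
        | positivity
        | exact_mod_cast hmn
        | exact Real.rpow_le_rpow (by positivity) (by exact_mod_cast hmn) (by positivity)
  -- key deterministic inclusion
  have hkey : ∀ t, 1 ≤ t → t ≤ n → ∀ ω, ω ∈ E t → u + 2 ≤ t ∧ ω ∈ G t ∪ H t := by
    intro t ht htn ω hω
    obtain ⟨hIt, hsu⟩ := hω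
    set s : ℕ := playCount I i (t - 1) ω with hsdef
    set s' : ℕ := playCount I istar (t - 1) ω with hs'def
    have hs1 : 1 ≤ s := le_trans hu1 hsu
    have hpol := hPolicy t ht ω istar
    rw [hIt] at hpol
    have hs'1 : 1 ≤ s' := by
      by_contra hcon
      have hs'0 : s' = 0 := by omega
      have h1 : ucbIdxE X β ξ α η I istar (t - 1) ω = ⊤ := by
        rw [ucbIdxE, if_pos (hs'def ▸ hs'0)]
      have h2 : ucbIdxE X β ξ α η I i (t - 1) ω
          = ((ucbIdx X β ξ α η i s (t - 1) ω : ℝ) : EReal) := by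
        rw [ucbIdxE, if_neg (by rw [← hsdef]; omega)]
      rw [h1, h2] at hpol
      exact EReal.coe_ne_top _ (top_le_iff.mp hpol)
    have hle : ucbIdx X β ξ α η istar s' (t - 1) ω ≤ ucbIdx X β ξ α η i s (t - 1) ω := by
      have h1 : ucbIdxE X β ξ α η I istar (t - 1) ω
          = ((ucbIdx X β ξ α η istar s' (t - 1) ω : ℝ) : EReal) := by
        rw [ucbIdxE, if_neg (by rw [← hs'def]; omega)]
      have h2 : ucbIdxE X β ξ α η I i (t - 1) ω
          = ((ucbIdx X β ξ α η i s (t - 1) ω : ℝ) : EReal) := by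
        rw [ucbIdxE, if_neg (by rw [← hsdef]; omega)]
      rw [h1, h2] at hpol
      exact EReal.coe_le_coe_iff.mp hpol
    have hsum : s + s' ≤ t - 1 := playCount_add_le' I (fun h => hi h) (t - 1) ω
    have htlb : u + 2 ≤ t := by omega
    refine ⟨htlb, ?_⟩
    by_cases hcase1 : ucbIdx X β ξ α η istar s' (t - 1) ω ≤ μ istar
    · left
      simp only [hGdef]
      refine Set.mem_iUnion₂.mpr ⟨s', Finset.mem_Icc.mpr ⟨hs'1, by omega⟩, ?_⟩
      have hs'0 : (0:ℝ) ≤ (s' : ℝ) := by positivity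
      have hmul := mul_le_mul_of_nonneg_left hcase1 hs'0
      have hbm := hbonus_mul s' (t - 1) hs'1
      simp only [ucbIdx] at hmul
      simp only [Set.mem_setOf_eq, hzdef]
      nlinarith [hmul, hbm]
    by_cases hcase2 : μ i + bonus β ξ α η (t - 1) s ≤ empAvg X i s ω
    · right
      simp only [hHdef]
      refine Set.mem_iUnion₂.mpr ⟨s, Finset.mem_Icc.mpr ⟨hsu, by omega⟩, ?_⟩
      have hs0 : (0:ℝ) ≤ (s : ℝ) := by positivity
      have hmul := mul_le_mul_of_nonneg_left hcase2 hs0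
      have hbm := hbonus_mul s (t - 1) hs1
      simp only [Set.mem_setOf_eq, hzdef, ge_iff_le]
      nlinarith [hmul, hbm]
    · exfalso
      push_neg at hcase1 hcase2
      simp only [ucbIdx] at hle
      have hΔlt : μ istar - μ i < 2 * bonus β ξ α η (t - 1) s := by
        simp only [ucbIdx] at hcase1
        linarith [hcase1, hcase2, hle]
      have hΔlt2 : μ istar - μ i < 2 * bonus β ξ α η n s :=
        lt_of_lt_of_le hΔlt (by linarith [hbonus_mono s (t - 1) hs1 (by omega)])
      have hs0 : (0:ℝ) < (s:ℝ) := by exact_mod_cast hs1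
      have hspow : (0:ℝ) < (s : ℝ) ^ (1 - η) := by positivity
      have hQ : ((s:ℝ)) ^ (1 - η) < 2 * β ^ (1 / ξ) * (n : ℝ) ^ (α / ξ) / (μ istar - μ i) := by
        rw [bonus] at hΔlt2
        rw [lt_div_iff₀ hΔ]
        have := mul_lt_mul_of_pos_right hΔlt2 hspow
        calc (s:ℝ) ^ (1 - η) * (μ istar - μ i)
            = (μ istar - μ i) * (s:ℝ) ^ (1 - η) := by ring
        _ < 2 * (β ^ (1 / ξ) * (n : ℝ) ^ (α / ξ) / (s:ℝ) ^ (1 - η)) * (s:ℝ) ^ (1 - η) := this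
        _ = 2 * β ^ (1 / ξ) * (n : ℝ) ^ (α / ξ) := by field_simp
      have hsA : (s : ℝ) < A := by
        have h1 := Real.rpow_lt_rpow (by positivity) hQ (show 0 < 1 / (1 - η) by positivity)
        have h2 : (((s:ℝ)) ^ (1 - η)) ^ (1 / (1 - η)) = (s : ℝ) := by
          rw [← Real.rpow_mul hs0.le, mul_one_div, div_self hη1.ne', Real.rpow_one]
        have h3 : (2 * β ^ (1 / ξ) * (n : ℝ) ^ (α / ξ) / (μ istar - μ i)) ^ (1 / (1 - η)) = A := by
          rw [hAdef]
          rw [show 2 * β ^ (1 / ξ) * (n : ℝ) ^ (α / ξ) / (μ istar - μ i)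
              = (2 * β ^ (1 / ξ) / (μ istar - μ i)) * (n : ℝ) ^ (α / ξ) by ring]
          rw [Real.mul_rpow (by positivity) (by positivity),
            ← Real.rpow_mul (Nat.cast_nonneg n)]
          congr 1
          field_simp
        rw [h2, h3] at h1
        exact h1
      have : (u : ℝ) ≤ (s : ℝ) := by exact_mod_cast hsu
      linarith
  -- probability bound for each bad event
  have hPE : ∀ t, u + 2 ≤ t → t ≤ n →
      P (E t) ≤ ENNReal.ofReal (2 * ((t - 1 : ℕ) : ℝ) ^ (1 - α)) := by
    intro t htu htn
    obtain ⟨m, hmdef⟩ : ∃ m, t - 1 = m := ⟨t - 1, rfl⟩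
    have hm1 : 1 ≤ m := by omega
    have hm0 : (0:ℝ) < (m : ℝ) := by exact_mod_cast hm1
    have hz1 : 1 ≤ z t := by
      simp only [hzdef]
      rw [hmdef]
      have : (1:ℝ) ≤ ((m:ℕ):ℝ) ^ (α / ξ) :=
        Real.one_le_rpow (by exact_mod_cast hm1) (by positivity)
      exact le_trans hb1 (le_mul_of_one_le_right (by positivity) this)
    have hzξ : β / (z t) ^ ξ = (m : ℝ) ^ (-α) := by
      simp only [hzdef]
      rw [hmdef]
      rw [Real.mul_rpow (by positivity) (by positivity),
        ← Real.rpow_mul hβ0.le, ← Real.rpow_mul hm0.le,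
        one_div_mul_cancel hξ.ne', div_mul_cancel₀ α hξ.ne', Real.rpow_one,
        Real.rpow_neg hm0.le]
      field_simp
    have hsub : E t ⊆ G t ∪ H t := fun ω hω => (hkey t (by omega) htn ω hω).2
    have hG : P (G t) ≤ (m : ENNReal) * ENNReal.ofReal ((m : ℝ) ^ (-α)) := by
      simp only [hGdef]
      rw [hmdef]
      refine le_trans (measure_biUnion_finset_le _ _) ?_
      calc ∑ s' ∈ Finset.Icc 1 m, P {ω | (s' : ℝ) * empAvg X istar s' ω - s' * μ istar
              ≤ -((s' : ℝ) ^ η * z t)}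
          ≤ ∑ s' ∈ Finset.Icc 1 m, ENNReal.ofReal ((m : ℝ) ^ (-α)) := by
            apply Finset.sum_le_sum
            intro s' hs'
            rw [Finset.mem_Icc] at hs'
            have := (hconc istar s' hs'.1 (z t) hz1).2
            rwa [hzξ] at this
      _ = (m : ENNReal) * ENNReal.ofReal ((m : ℝ) ^ (-α)) := by
            rw [Finset.sum_const, Nat.card_Icc]
            simp [nsmul_eq_mul]
    have hH : P (H t) ≤ (m : ENNReal) * ENNReal.ofReal ((m : ℝ) ^ (-α)) := by
      simp only [hHdef]
      rw [hmdef]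
      refine le_trans (measure_biUnion_finset_le _ _) ?_
      calc ∑ s ∈ Finset.Icc u m, P {ω | (s : ℝ) * empAvg X i s ω - s * μ i
              ≥ (s : ℝ) ^ η * z t}
          ≤ ∑ s ∈ Finset.Icc u m, ENNReal.ofReal ((m : ℝ) ^ (-α)) := by
            apply Finset.sum_le_sum
            intro s hs
            rw [Finset.mem_Icc] at hs
            have := (hconc i s (le_trans hu1 hs.1) (z t) hz1).1
            rwa [hzξ] at this
      _ ≤ (m : ENNReal) * ENNReal.ofReal ((m : ℝ) ^ (-α)) := by
            rw [Finset.sum_const, nsmul_eq_mul]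
            gcongr
            have hcard : (Finset.Icc u m).card ≤ m := by rw [Nat.card_Icc]; omega
            exact_mod_cast hcard
    calc P (E t) ≤ P (G t ∪ H t) := measure_mono hsub
    _ ≤ P (G t) + P (H t) := measure_union_le _ _
    _ ≤ (m : ENNReal) * ENNReal.ofReal ((m : ℝ) ^ (-α))
          + (m : ENNReal) * ENNReal.ofReal ((m : ℝ) ^ (-α)) := add_le_add hG hH
    _ = ENNReal.ofReal (2 * (m : ℝ) * (m : ℝ) ^ (-α)) := by
          rw [show (2:ℝ) * (m:ℝ) * (m:ℝ) ^ (-α)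
              = (m:ℝ) * ((m:ℝ) ^ (-α)) + (m:ℝ) * ((m:ℝ) ^ (-α)) by ring,
            ENNReal.ofReal_add (by positivity) (by positivity),
            ENNReal.ofReal_mul (by positivity), ENNReal.ofReal_natCast]
    _ = ENNReal.ofReal (2 * ((t - 1 : ℕ) : ℝ) ^ (1 - α)) := by
          congr 1
          rw [hmdef, show (1:ℝ) - α = 1 + (-α) by ring, Real.rpow_add hm0, Real.rpow_one]
          ring
  -- empty events for small t
  have hPE0 : ∀ t, 1 ≤ t → t ≤ n → t < u + 2 → P (E t) = 0 := by
    intro t ht htn htu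
    have : E t = ∅ := by
      ext ω
      simp only [Set.mem_empty_iff_false, iff_false]
      intro hω
      exact absurd (hkey t ht htn ω hω).1 (by omega)
    rw [this]; exact measure_empty
  -- integral bound
  have hind_int : ∀ t, Integrable ((E t).indicator (fun _ => (1:ℝ))) P := by
    intro t
    exact (integrable_const (1:ℝ)).indicator (hEmeas t)
  have hg_int : Integrable (fun ω => (u : ℝ)
      + ∑ t ∈ Finset.Icc 1 n, (E t).indicator (fun _ => (1:ℝ)) ω) P := by
    exact (integrable_const _).add (integrable_finset_sum _ (fun t _ => hind_int t))
  have hf_meas : Measurable (fun ω => (playCount I i n ω : ℝ)) :=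
    Measurable.comp measurable_from_top (measurable_playCount' hImeas i n)
  have hf_int : Integrable (fun ω => (playCount I i n ω : ℝ)) P := by
    apply Integrable.mono' (integrable_const (n : ℝ)) hf_meas.aestronglyMeasurable
    filter_upwards with ω
    rw [Real.norm_eq_abs, abs_of_nonneg (by positivity)]
    exact_mod_cast playCount_le' I i n ω
  have hpt : ∀ ω, (playCount I i n ω : ℝ)
      ≤ (u : ℝ) + ∑ t ∈ Finset.Icc 1 n, (E t).indicator (fun _ => (1:ℝ)) ω := by
    intro ω
    have h := playCount_le_decomp' I i u n ω
    have h2 : (playCount I i n ω : ℝ) ≤ (u : ℝ) + ∑ t ∈ Finset.Icc 1 n,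
        (if I t ω = i ∧ u ≤ playCount I i (t - 1) ω then (1:ℝ) else 0) := by
      exact_mod_cast h
    refine h2.trans (le_of_eq ?_)
    congr 1
    apply Finset.sum_congr rfl
    intro t _
    rw [Set.indicator_apply]
    by_cases hc : I t ω = i ∧ u ≤ playCount I i (t - 1) ω
    · rw [if_pos hc, if_pos (show ω ∈ E t from hc)]
    · rw [if_neg hc, if_neg (show ω ∉ E t from hc)]
  have hint : ∫ ω, (playCount I i n ω : ℝ) ∂P
      ≤ (u : ℝ) + ∑ t ∈ Finset.Icc 1 n, (P (E t)).toReal := by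
    calc ∫ ω, (playCount I i n ω : ℝ) ∂P
        ≤ ∫ ω, ((u : ℝ) + ∑ t ∈ Finset.Icc 1 n, (E t).indicator (fun _ => (1:ℝ)) ω) ∂P :=
          integral_mono hf_int hg_int hpt
    _ = (u : ℝ) + ∑ t ∈ Finset.Icc 1 n, (P (E t)).toReal := by
        rw [integral_add (integrable_const _) (integrable_finset_sum _ (fun t _ => hind_int t)),
          integral_finset_sum _ (fun t _ => hind_int t)]
        congr 1
        · simp
        · apply Finset.sum_congr rfl
          intro t _
          rw [MeasureTheory.integral_indicator_const (1:ℝ) (hEmeas t), smul_eq_mul, mul_one]; rfl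
  have hsum : ∑ t ∈ Finset.Icc 1 n, (P (E t)).toReal ≤ 2 / (α - 2) := by
    have hstep : ∀ t ∈ Finset.Icc 1 n, (P (E t)).toReal
        ≤ (if u + 2 ≤ t then 2 * ((t - 1 : ℕ) : ℝ) ^ (1 - α) else 0) := by
      intro t ht
      rw [Finset.mem_Icc] at ht
      by_cases hc : u + 2 ≤ t
      · rw [if_pos hc]
        refine le_trans (ENNReal.toReal_mono ENNReal.ofReal_ne_top (hPE t hc ht.2)) ?_
        rw [ENNReal.toReal_ofReal (by positivity)]
      · rw [if_neg hc, hPE0 t ht.1 ht.2 (by omega)]; simp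
    calc ∑ t ∈ Finset.Icc 1 n, (P (E t)).toReal
        ≤ ∑ t ∈ Finset.Icc 1 n, (if u + 2 ≤ t then 2 * ((t - 1 : ℕ) : ℝ) ^ (1 - α) else 0) :=
          Finset.sum_le_sum hstep
    _ = ∑ t ∈ (Finset.Icc 1 n).filter (fun t => u + 2 ≤ t),
          2 * ((t - 1 : ℕ) : ℝ) ^ (1 - α) := (Finset.sum_filter _ _).symm
    _ = ∑ m ∈ Finset.Icc (u + 1) (n - 1), 2 * ((m : ℕ) : ℝ) ^ (1 - α) := by
          apply Finset.sum_nbij' (i := fun t => t - 1) (j := fun m => m + 1)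
          · intro a ha; simp only [Finset.mem_filter, Finset.mem_Icc] at ha ⊢; omega
          · intro a ha; simp only [Finset.mem_filter, Finset.mem_Icc] at ha ⊢; omega
          · intro a ha; simp only [Finset.mem_filter, Finset.mem_Icc] at ha; omega
          · intro a _; omega
          · intro a _; rfl
    _ ≤ ∑ m ∈ Finset.Icc 2 (n - 1), 2 * ((m : ℕ) : ℝ) ^ (1 - α) := by
          apply Finset.sum_le_sum_of_subset_of_nonneg
          · intro x hx
            rw [Finset.mem_Icc] at *
            omega
          · intro x _ _; positivity
    _ = 2 * ∑ m ∈ Finset.Icc 2 (n - 1), ((m : ℕ) : ℝ) ^ (1 - α) := by rw [Finset.mul_sum]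
    _ ≤ 2 * (1 / (α - 2)) := by
          have h := sum_rpow_le' hα2 (n - 1)
          linarith
    _ = 2 / (α - 2) := by ring
  linarith [hint, hsum, huA]
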